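/- Let G be a connected undirected graph on [n], let P be an all-pairs set of paths for G, and let L≥2 be an integer. For every x∈{1}×[n]^L, the vertex x_{L+1} is the unique global minimizer of f_x: f_x(x_{L+1}) < f_x(v) for every vertex v∈[n] with v≠x_{L+1}. -/

import Mathlib

open Finset

/-- An all-pairs set of simple paths in `G`, with `P^{u,u}` the trivial path. -/
structure PathSystem {n : ℕ} (G : SimpleGraph (Fin n)) where
  path : ∀ u v : Fin n, G.Walk u v
  isPath : ∀ u v : Fin n, (path u v).IsPath
  diag : ∀ u : Fin n, path u u = SimpleGraph.Walk.nil

/-- Vertex congestion of a path system: max over vertices of total occurrences. -/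
def PathSystem.congestion {n : ℕ} {G : SimpleGraph (Fin n)} (P : PathSystem G) : ℕ :=
  Finset.univ.sup fun w : Fin n =>
    ∑ u : Fin n, ∑ v : Fin n, (P.path u v).support.count w

/-- Support of the `i`-th quasi-segment `P^{x_i, x_{i+1}}` (0-based). -/
def segSupport {n L : ℕ} {G : SimpleGraph (Fin n)} (P : PathSystem G)
    (x : Fin (L + 1) → Fin n) (i : ℕ) : List (Fin n) :=
  (P.path (x ⟨min i L, by omega⟩) (x ⟨min (i + 1) L, by omega⟩)).support

/-- Support of the staircase walk `P^{x_j,x_{j+1}} ∘ ⋯ ∘ P^{x_{L-1},x_L}` (0-based `j`). -/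
def stairSupportFrom {n L : ℕ} {G : SimpleGraph (Fin n)} (P : PathSystem G)
    (x : Fin (L + 1) → Fin n) (j : ℕ) : List (Fin n) :=
  x ⟨min j L, by omega⟩ ::
    (List.ofFn fun k : Fin (L - j) =>
      (P.path (x ⟨j + k, by have := k.isLt; omega⟩)
              (x ⟨j + k + 1, by have := k.isLt; omega⟩)).support.tail).flatten

/-- `Tail(j, S_x)` (0-based `j`): the staircase from `x_j` with the first occurrence
of `x_j` removed. -/
def tailSupport {n L : ℕ} {G : SimpleGraph (Fin n)} (P : PathSystem G)
    (x : Fin (L + 1) → Fin n) (j : ℕ) : List (Fin n) :=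
  (stairSupportFrom P x j).erase (x ⟨min j L, by omega⟩)

/-- Largest 0-based index `i` such that the prefixes `x_0 … x_i` and `y_0 … y_i` agree
(`J_{x,y} - 1` in 1-based notation). -/
def J0 {n L : ℕ} (x y : Fin (L + 1) → Fin n) : ℕ :=
  (Finset.univ.filter fun i : Fin (L + 1) => ∀ k ≤ i, x k = y k).sup fun i => (i : ℕ)

/-- `q_v(u)`: the number of paths in `P` starting at `u` that contain `v`. -/
def qcount {n : ℕ} {G : SimpleGraph (Fin n)} (P : PathSystem G) (v u : Fin n) : ℕ :=
  (Finset.univ.filter fun w : Fin n => v ∈ (P.path u w).support).card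

/-- Largest 0-based index `i` with `v ∈ P^{x_i,x_{i+1}}`. -/
def maxSegIdx {n L : ℕ} {G : SimpleGraph (Fin n)} (P : PathSystem G)
    (x : Fin (L + 1) → Fin n) (v : Fin n) : ℕ :=
  ((Finset.range L).filter fun i => v ∈ segSupport P x i).sup id

/-- The function `f_x`. -/
noncomputable def fS {n L : ℕ} {G : SimpleGraph (Fin n)} (P : PathSystem G)
    (x : Fin (L + 1) → Fin n) (v : Fin n) : ℤ :=
  if v ∈ stairSupportFrom P x 0 then
    -(((maxSegIdx P x v : ℤ) + 1) * n) - (((segSupport P x (maxSegIdx P x v)).idxOf v : ℤ) + 1)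
  else (G.dist v (x 0) : ℤ)

/-- The function `g_{x,b}`. -/
noncomputable def gS {n L : ℕ} {G : SimpleGraph (Fin n)} (P : PathSystem G)
    (x : Fin (L + 1) → Fin n) (b : ℤ) (v : Fin n) : ℤ × ℤ :=
  if v = x (Fin.last L) then (fS P x v, b) else (fS P x v, -1)

/-- The relation `r*`. -/
noncomputable def rstar {n L : ℕ} (x y : Fin (L + 1) → Fin n) (b1 b2 : ℤ) : ℝ :=
  if b1 = b2 ∨ ¬ Function.Injective x ∨ ¬ Function.Injective y then 0
  else (n : ℝ) ^ (J0 x y + 1)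

/-- The relation `r`. -/
noncomputable def rrel {n L : ℕ} (x y : Fin (L + 1) → Fin n) (b1 b2 : ℤ) : ℝ :=
  if x = y then 0 else rstar x y b1 b2

/-- The relation `r'`. -/
noncomputable def rprime {n L : ℕ} {G : SimpleGraph (Fin n)} (P : PathSystem G) (g : ℕ)
    (x y : Fin (L + 1) → Fin n) (b1 b2 : ℤ) (v : Fin n) : ℝ :=
  if gS P x b1 v = gS P y b2 v ∨ b1 = b2 then 0
  else if v ∈ tailSupport P x (J0 x y) ∧ v ∉ tailSupport P y (J0 x y) then
    rrel x y b1 b2 * g / (n : ℝ) ^ (1.5 : ℝ)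
  else if v ∈ tailSupport P y (J0 x y) ∧ v ∉ tailSupport P x (J0 x y) then
    rrel x y b1 b2 * (n : ℝ) ^ (1.5 : ℝ) / g
  else rrel x y b1 b2

/-- The vertex congestion of the graph `G`. -/
noncomputable def vertexCongestion {n : ℕ} (G : SimpleGraph (Fin n)) : ℕ :=
  sInf {c | ∃ P : PathSystem G, P.congestion = c}

/-- The number of cut edges `|E(S, V∖S)|`. -/
def cutEdges {n : ℕ} (G : SimpleGraph (Fin n)) [DecidableRel G.Adj]
    (S : Finset (Fin n)) : ℕ :=
  ((S ×ˢ Sᶜ).filter fun p => G.Adj p.1 p.2).card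


section
variable {n L : ℕ} {G : SimpleGraph (Fin n)} (P : PathSystem G) (x : Fin (L + 1) → Fin n)

lemma path_support_congr {a a' b b' : Fin n} (ha : a = a') (hb : b = b') :
    (P.path a b).support = (P.path a' b').support := by subst ha; subst hb; rfl

lemma seg_eq {i : ℕ} (hi : i < L) :
    segSupport P x i
      = (P.path (x ⟨i, by omega⟩) (x ⟨i + 1, by omega⟩)).support := by
  refine path_support_congr P (congrArg x ?_) (congrArg x ?_) <;> ext <;> simp <;> omega

lemma tail_mem_stair {i : ℕ} (hi : i < L) {v : Fin n}
    (hv : v ∈ (P.path (x ⟨i, by omega⟩) (x ⟨i + 1, by omega⟩)).support.tail) :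
    v ∈ stairSupportFrom P x 0 := by
  refine List.mem_cons_of_mem _ (List.mem_flatten.2 ?_)
  refine ⟨_, List.mem_ofFn.2 ⟨⟨i, by omega⟩, rfl⟩, ?_⟩
  have e : (P.path (x ⟨0 + (⟨i, by omega⟩ : Fin (L - 0)), by omega⟩)
        (x ⟨0 + (⟨i, by omega⟩ : Fin (L - 0)) + 1, by omega⟩)).support
      = (P.path (x ⟨i, by omega⟩) (x ⟨i + 1, by omega⟩)).support :=
    path_support_congr P (congrArg x (by ext; simp)) (congrArg x (by ext; simp))
  simpa [congrArg List.tail e] using hv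

lemma stair_head : stairSupportFrom P x 0
    = x ⟨0, by omega⟩ :: (List.ofFn fun k : Fin (L - 0) =>
      (P.path (x ⟨0 + k, by have := k.isLt; omega⟩)
              (x ⟨0 + k + 1, by have := k.isLt; omega⟩)).support.tail).flatten := by
  rw [stairSupportFrom]
  exact congrArg₂ _ (congrArg x (by ext; simp)) rfl

lemma mem_stair_of_mem_seg :
    ∀ i, i < L → ∀ v, v ∈ segSupport P x i → v ∈ stairSupportFrom P x 0 := by
  intro i
  induction i with
  | zero =>
    intro h0 v hv
    rw [seg_eq P x h0, SimpleGraph.Walk.mem_support_iff] at hv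
    rcases hv with rfl | hv
    · rw [stair_head]
      have : x (0 : Fin (L+1)) = x ⟨0, by omega⟩ := congrArg x (by ext; simp)
      exact this ▸ List.mem_cons_self
    · exact tail_mem_stair P x h0 hv
  | succ i ih =>
    intro hi v hv
    rw [seg_eq P x hi, SimpleGraph.Walk.mem_support_iff] at hv
    rcases hv with rfl | hv
    · apply ih (by omega)
      rw [seg_eq P x (by omega : i < L)]
      exact SimpleGraph.Walk.end_mem_support _
    · exact tail_mem_stair P x hi hv

lemma exists_seg_of_mem_stair (hL : 1 ≤ L) {v : Fin n}
    (hv : v ∈ stairSupportFrom P x 0) : ∃ i < L, v ∈ segSupport P x i := by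
  rw [stair_head] at hv
  rcases List.mem_cons.1 hv with rfl | hv
  · refine ⟨0, by omega, ?_⟩
    rw [seg_eq P x (by omega : 0 < L)]
    exact SimpleGraph.Walk.start_mem_support _
  · obtain ⟨l, hl, hvl⟩ := List.mem_flatten.1 hv
    obtain ⟨k, rfl⟩ := List.mem_ofFn.1 hl
    refine ⟨k, by have := k.isLt; omega, ?_⟩
    rw [seg_eq P x (by have := k.isLt; omega : (k : ℕ) < L)]
    have e : (P.path (x ⟨0 + (k : ℕ), by have := k.isLt; omega⟩)
          (x ⟨0 + (k : ℕ) + 1, by have := k.isLt; omega⟩)).support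
        = (P.path (x ⟨(k : ℕ), by have := k.isLt; omega⟩)
            (x ⟨(k : ℕ) + 1, by have := k.isLt; omega⟩)).support :=
      path_support_congr P (congrArg x (by ext; simp)) (congrArg x (by ext; simp))
    rw [← e]
    exact List.mem_of_mem_tail hvl

lemma maxSegIdx_spec (hL : 1 ≤ L) {v : Fin n} (hv : v ∈ stairSupportFrom P x 0) :
    maxSegIdx P x v < L ∧ v ∈ segSupport P x (maxSegIdx P x v) := by
  obtain ⟨i, hiL, hiv⟩ := exists_seg_of_mem_stair P x hL hv
  have hne : ((Finset.range L).filter fun j => v ∈ segSupport P x j).Nonempty :=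
    ⟨i, Finset.mem_filter.2 ⟨Finset.mem_range.2 hiL, hiv⟩⟩
  obtain ⟨b, hb, hbe⟩ := Finset.exists_mem_eq_sup _ hne id
  rw [Finset.mem_filter, Finset.mem_range] at hb
  exact ⟨by rw [maxSegIdx, hbe]; exact hb.1, by rw [maxSegIdx, hbe]; exact hb.2⟩

lemma maxSegIdx_last (hL : 1 ≤ L) : maxSegIdx P x (x (Fin.last L)) = L - 1 := by
  have hmem : x (Fin.last L) ∈ segSupport P x (L - 1) := by
    rw [seg_eq P x (by omega : L - 1 < L)]
    have : x ⟨L - 1 + 1, by omega⟩ = x (Fin.last L) := congrArg x (by ext; simp; omega)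
    rw [← this]
    exact SimpleGraph.Walk.end_mem_support _
  apply le_antisymm
  · exact Finset.sup_le fun b hb => by
      have := Finset.mem_range.1 (Finset.mem_filter.1 hb).1; simp [id]; omega
  · exact Finset.le_sup (f := id)
      (Finset.mem_filter.2 ⟨Finset.mem_range.2 (by omega), hmem⟩)
end

theorem stmt9 {n L : ℕ} (hn : 2 ≤ n) (hL : 2 ≤ L)
    (G : SimpleGraph (Fin n)) (hG : G.Connected) (P : PathSystem G)
    (x : Fin (L + 1) → Fin n) (hx1 : x 0 = ⟨0, by omega⟩) :
    ∀ v : Fin n, v ≠ x (Fin.last L) → fS P x (x (Fin.last L)) < fS P x v := by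
  intro v hv
  have hL1 : (1 : ℕ) ≤ L := by omega
  set T := x (Fin.last L) with hT
  have hsegT : segSupport P x (L - 1) = (P.path (x ⟨L - 1, by omega⟩) T).support := by
    rw [seg_eq P x (by omega : L - 1 < L)]
    exact path_support_congr P rfl (congrArg x (by ext; simp; omega))
  have hnodup : (segSupport P x (L - 1)).Nodup := by
    rw [hsegT]; exact (P.isPath _ _).support_nodup
  have hTmem : T ∈ segSupport P x (L - 1) := by
    rw [hsegT]; exact SimpleGraph.Walk.end_mem_support _
  have hTstair : T ∈ stairSupportFrom P x 0 :=
    mem_stair_of_mem_seg P x (L - 1) (by omega) T hTmem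
  have hnnil : segSupport P x (L - 1) ≠ [] := by
    rw [hsegT]; exact SimpleGraph.Walk.support_ne_nil _
  have hlen1 : 1 ≤ (segSupport P x (L - 1)).length := List.length_pos_iff.2 hnnil
  have hlenn : (segSupport P x (L - 1)).length ≤ n := by
    simpa using hnodup.length_le_card
  have hgl : (segSupport P x (L - 1)).getLast hnnil = T := by
    have h1 : (segSupport P x (L - 1)).getLast? = some T := by
      rw [hsegT, List.getLast?_eq_getLast (SimpleGraph.Walk.support_ne_nil _),
        SimpleGraph.Walk.getLast_support]
    rw [List.getLast?_eq_getLast hnnil] at h1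
    exact Option.some.inj h1
  have hidxT : (segSupport P x (L - 1)).idxOf T = (segSupport P x (L - 1)).length - 1 := by
    rw [← hgl, List.getLast_eq_getElem]
    exact hnodup.idxOf_getElem _ _
  have hmaxT := maxSegIdx_last P x hL1
  rw [← hT] at hmaxT
  have hfT : fS P x T
      = -(L : ℤ) * n - (segSupport P x (L - 1)).length := by
    rw [fS, if_pos hTstair, hmaxT, hidxT]
    have h1 : ((L - 1 : ℕ) : ℤ) = (L : ℤ) - 1 := by omega
    have h2 : (((segSupport P x (L - 1)).length - 1 : ℕ) : ℤ)
        = ((segSupport P x (L - 1)).length : ℤ) - 1 := by omega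
    rw [h1, h2]; ring
  by_cases hvs : v ∈ stairSupportFrom P x 0
  · obtain ⟨hiL, hmemv⟩ := maxSegIdx_spec P x hL1 hvs
    set i := maxSegIdx P x v with hi
    have hjlt : (segSupport P x i).idxOf v < (segSupport P x i).length :=
      List.idxOf_lt_length_iff.2 hmemv
    have hilen : (segSupport P x i).length ≤ n := by
      have hnd : (segSupport P x i).Nodup := by
        rw [seg_eq P x hiL]; exact (P.isPath _ _).support_nodup
      simpa using hnd.length_le_card
    have hfv : fS P x v
        = -((i : ℤ) + 1) * n - (((segSupport P x i).idxOf v : ℤ) + 1) := by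
      rw [fS, if_pos hvs, ← hi]; ring
    rw [hfT, hfv]
    by_cases hic : i = L - 1
    · rw [hic] at hjlt hmemv ⊢
      have hne : (segSupport P x (L - 1)).idxOf v
          ≠ (segSupport P x (L - 1)).length - 1 := by
        intro h
        apply hv
        exact (List.idxOf_inj hmemv).1 (by omega)
      have hcast : ((L - 1 : ℕ) : ℤ) + 1 = (L : ℤ) := by omega
      rw [hcast]
      have : ((segSupport P x (L - 1)).idxOf v : ℤ) + 1
          < ((segSupport P x (L - 1)).length : ℤ) := by omega
      linarith
    · have hi2 : (i : ℤ) + 1 ≤ (L : ℤ) - 1 := by omega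
      have hmul : ((i : ℤ) + 1) * n ≤ ((L : ℤ) - 1) * n :=
        mul_le_mul_of_nonneg_right hi2 (by positivity)
      have hjn : ((segSupport P x i).idxOf v : ℤ) + 1 ≤ (n : ℤ) := by omega
      have hlen1' : (1 : ℤ) ≤ ((segSupport P x (L - 1)).length : ℤ) := by omega
      nlinarith
  · rw [hfT, fS, if_neg hvs]
    have h0 : (0 : ℤ) ≤ (G.dist v (x 0) : ℤ) := by positivity
    have h2 : (2 : ℤ) ≤ (L : ℤ) := by omega
    have h2n : (2 : ℤ) ≤ (n : ℤ) := by omega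
    nlinarith [hlen1]
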